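/- Assume α̃ < 1 (hence 0 < r < 1). Then the probability that the server is in a working vacation period satisfies P(J=0) = Σ_{k≥0} π_{k0} = K·(θ/(1−r) + θ̄μ_v). -/

import Mathlib

/-- Geo/Geo/1 with multiple working vacations, partially observable case.
P(J = 0) = Σ_{k≥0} π_{k0} = K (θ/(1-r) + θ̄ μ_v). -/
theorem stmt_6
    (p μb μv θ q0 q1 p0 p1 al be r K : ℝ) (π0 π1 : ℕ → ℝ)
    (hp : p ∈ Set.Ioo (0:ℝ) 1) (hμb : μb ∈ Set.Ioo (0:ℝ) 1)
    (hμv : μv ∈ Set.Ioo (0:ℝ) 1) (hθ : θ ∈ Set.Ioo (0:ℝ) 1)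
    (hq0 : q0 ∈ Set.Icc (0:ℝ) 1) (hq1 : q1 ∈ Set.Icc (0:ℝ) 1)
    (hp0 : p0 = p * q0) (hp1 : p1 = p * q1)
    (hp0m : p0 ∈ Set.Ioo (0:ℝ) 1) (hp1m : p1 ∈ Set.Ioo (0:ℝ) 1)
    (hal : al = p1 * (1 - μb) / ((1 - p1) * μb))
    (hbe : be = θ / (1 - θ))
    (hr : r = (be + p0 * (1 - μv) + (1 - p0) * μv -
        Real.sqrt ((be + p0 * (1 - μv) + (1 - p0) * μv) ^ 2 -
          4 * p0 * (1 - p0) * μv * (1 - μv))) / (2 * (1 - p0) * μv))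
    (hK : K = (1 - p1) * μb * (1 - r) * (1 - al) /
        ((1 - p1) * μb * (1 - r) * (1 - al) *
          (θ + (1 - θ) * (1 - p0) * μv * (1 - r) + p0 * (1 - θ)) + p0 * θ))
    (hπ00 : π0 0 = K * (θ + (1 - θ) * (1 - p0) * μv * (1 - r)))
    (hπ0k : ∀ k : ℕ, 1 ≤ k → π0 k = K * p0 * (1 - θ) * (1 - r) * r ^ (k - 1))
    (hπ1k : ∀ k : ℕ, 1 ≤ k →
      π1 k = K * (p0 * θ / ((1 - p1) * μb)) * ∑ j ∈ Finset.range k, r ^ j * al ^ (k - 1 - j))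
    (hal1 : al < 1) :
    Summable π0 ∧ (∑' k : ℕ, π0 k) = K * (θ / (1 - r) + (1 - θ) * μv) := by
  obtain ⟨hp0a, hp0b⟩ := hp0m
  obtain ⟨hθa, hθb⟩ := hθ
  obtain ⟨hμva, hμvb⟩ := hμv
  have hθ1 : (0:ℝ) < 1 - θ := by linarith
  have hp01 : (0:ℝ) < 1 - p0 := by linarith
  have hμv1 : (0:ℝ) < 1 - μv := by linarith
  have hbpos : 0 < be := by rw [hbe]; exact div_pos hθa hθ1
  set S : ℝ := be + p0 * (1 - μv) + (1 - p0) * μv with hS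
  set a : ℝ := (1 - p0) * μv with haa
  have ha : 0 < a := by rw [haa]; positivity
  have hx : 0 < p0 * (1 - μv) := by positivity
  have hSpos : 0 < S := by rw [hS, haa]; linarith
  have hxy : 0 < 4 * p0 * (1 - p0) * μv * (1 - μv) := by positivity
  have hD : 0 < S ^ 2 - 4 * p0 * (1 - p0) * μv * (1 - μv) := by
    rw [hS, haa]
    nlinarith [sq_nonneg (p0 * (1 - μv) - (1 - p0) * μv), mul_pos hbpos hbpos,
      mul_pos hbpos hx, mul_pos hbpos (mul_pos hp01 hμva)]
  set s : ℝ := Real.sqrt (S ^ 2 - 4 * p0 * (1 - p0) * μv * (1 - μv)) with hsdef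
  have hs2 : s ^ 2 = S ^ 2 - 4 * p0 * (1 - p0) * μv * (1 - μv) := Real.sq_sqrt hD.le
  have hspos : 0 < s := Real.sqrt_pos.2 hD
  have h2a : 2 * (1 - p0) * μv ≠ 0 := by positivity
  have hrS : r * (2 * a) = S - s := by
    rw [hr, show 2 * a = 2 * (1 - p0) * μv by rw [haa]; ring]
    exact div_mul_cancel₀ _ h2a
  have hs' : s = S - r * (2 * a) := by linarith
  have h4 : 4 * a * (a * r ^ 2 - S * r + p0 * (1 - μv)) = 0 := by
    have h := hs2
    rw [hs'] at h
    linear_combination h + 4 * p0 * (1 - μv) * haa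
  have hquad : a * r ^ 2 - S * r + p0 * (1 - μv) = 0 :=
    (mul_eq_zero.mp h4).resolve_left (by positivity)
  have hsltS : s < S := by
    have h1 : s ^ 2 < S ^ 2 := by rw [hs2]; linarith
    exact lt_of_pow_lt_pow_left₀ 2 hSpos.le h1
  have hdiff : s ^ 2 - (S - 2 * a) ^ 2 = 4 * a * be := by
    rw [hs2]
    linear_combination 4 * a * hS + 4 * p0 * (1 - μv) * haa
  have hSs : S - 2 * a < s := by
    have h1 : (S - 2 * a) ^ 2 < s ^ 2 := by nlinarith [mul_pos ha hbpos]
    exact lt_of_pow_lt_pow_left₀ 2 hspos.le h1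
  have hr0 : 0 < r := by
    have h : 0 * (2 * a) < r * (2 * a) := by rw [hrS]; simpa using by linarith
    exact lt_of_mul_lt_mul_right h (by linarith)
  have hr1 : r < 1 := by
    have h : r * (2 * a) < 1 * (2 * a) := by rw [hrS]; linarith
    exact lt_of_mul_lt_mul_right h (by linarith)
  have hrne : (1 : ℝ) - r ≠ 0 := by linarith
  have hbe2 : be * (1 - θ) = θ := by rw [hbe]; field_simp
  have hq2 : (1 - θ) * ((1 - p0) * μv) * r ^ 2 -
      (θ + (1 - θ) * (p0 * (1 - μv)) + (1 - θ) * ((1 - p0) * μv)) * r +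
      (1 - θ) * (p0 * (1 - μv)) = 0 := by
    have h := hquad
    rw [hS, haa] at h
    linear_combination (1 - θ) * h + r * hbe2
  have hkey : θ + (1 - θ) * (1 - p0) * μv * (1 - r) + p0 * (1 - θ) =
      θ / (1 - r) + (1 - θ) * μv := by
    have h2 : (θ + (1 - θ) * (1 - p0) * μv * (1 - r) + p0 * (1 - θ)) * (1 - r) =
        (θ / (1 - r) + (1 - θ) * μv) * (1 - r) := by
      conv_rhs => rw [add_mul, div_mul_cancel₀ _ hrne]
      linear_combination hq2
    exact mul_right_cancel₀ hrne h2
  set c : ℝ := K * p0 * (1 - θ) * (1 - r) with hc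
  have hshift : (fun k : ℕ => π0 (k + 1)) = fun k : ℕ => c * r ^ k := by
    funext k
    rw [hπ0k (k + 1) (Nat.le_add_left 1 k)]
    simp
  have hsum1 : Summable (fun k : ℕ => π0 (k + 1)) := by
    rw [hshift]
    exact (summable_geometric_of_lt_one hr0.le hr1).mul_left c
  have hsum : Summable π0 := (summable_nat_add_iff 1).mp hsum1
  refine ⟨hsum, ?_⟩
  rw [Summable.tsum_eq_zero_add hsum]
  have htsum : ∑' k : ℕ, π0 (k + 1) = c * (1 - r)⁻¹ := by
    rw [hshift, tsum_mul_left, tsum_geometric_of_lt_one hr0.le hr1]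
  rw [htsum, hπ00, ← hkey, hc]
  field_simp
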